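/- For every h ≥ 0 and ρ ∈ (0,1), the leaf covariance matrix Σ^{(h)} is positive definite (in particular, it is invertible). -/

import Mathlib

open Finset Matrix

/-- Length of the longest common prefix of two binary strings of length `h`
(equal to `h` when the strings coincide). -/
def lcpLen (h : ℕ) (s t : Fin h → Bool) : ℕ :=
  (Finset.univ.filter (fun i : Fin h => ∀ j : Fin h, j ≤ i → s j = t j)).card

/-- Tree distance between two leaves of the `h`-level balanced binary tree. -/
def treeDist (h : ℕ) (s t : Fin h → Bool) : ℕ :=
  2 * (h - lcpLen h s t)

/-- Leaf covariance matrix `Σ^{(h)}` with correlation parameter `ρ`. -/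
noncomputable def SigmaLeaf (h : ℕ) (ρ : ℝ) :
    Matrix (Fin h → Bool) (Fin h → Bool) ℝ :=
  fun s t => ρ ^ treeDist h s t

namespace SigmaAux

variable {h : ℕ}

lemma lcpLen_le (s t : Fin h → Bool) : lcpLen h s t ≤ h := by
  classical
  calc lcpLen h s t ≤ (Finset.univ : Finset (Fin h)).card := Finset.card_filter_le _ _
    _ = h := by simp

lemma lcpLen_symm (s t : Fin h → Bool) : lcpLen h s t = lcpLen h t s := by
  unfold lcpLen
  congr 1
  apply Finset.filter_congr
  intro i _
  constructor <;> exact fun H j hj => (H j hj).symm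

lemma mem_iff (s t : Fin h → Bool) (i : Fin h) :
    (∀ j : Fin h, j ≤ i → s j = t j) ↔ (i : ℕ) < lcpLen h s t := by
  classical
  set S := Finset.univ.filter (fun i : Fin h => ∀ j : Fin h, j ≤ i → s j = t j) with hS
  have hcard : lcpLen h s t = S.card := rfl
  have hdown : ∀ i ∈ S, ∀ j : Fin h, j ≤ i → j ∈ S := by
    intro i hi j hj
    simp only [hS, Finset.mem_filter, Finset.mem_univ, true_and] at hi ⊢
    exact fun k hk => hi k (hk.trans hj)
  constructor
  · intro hi
    have hiS : i ∈ S := by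
      simp only [hS, Finset.mem_filter, Finset.mem_univ, true_and]; exact hi
    have hsub : Finset.Iic i ⊆ S := fun j hj => hdown i hiS j (Finset.mem_Iic.1 hj)
    have := Finset.card_le_card hsub
    rw [Fin.card_Iic] at this
    omega
  · intro hlt
    by_contra hni
    have hniS : i ∉ S := by
      simp only [hS, Finset.mem_filter, Finset.mem_univ, true_and]; exact hni
    have hsub : S ⊆ Finset.Iio i := by
      intro j hj
      rw [Finset.mem_Iio]
      by_contra hij
      exact hniS (hdown j hj i (le_of_not_gt hij))
    have := Finset.card_le_card hsub
    rw [Fin.card_Iio] at this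
    omega

lemma lcp_ge_iff (s t : Fin h → Bool) (k : ℕ) (hk : k ≤ h) :
    k ≤ lcpLen h s t ↔ ∀ j : Fin h, (j : ℕ) < k → s j = t j := by
  constructor
  · intro hkl j hj
    exact ((mem_iff s t j).2 (lt_of_lt_of_le hj hkl)) j le_rfl
  · intro H
    rcases Nat.eq_zero_or_pos k with rfl | hk0
    · exact Nat.zero_le _
    · have h1 : k - 1 < h := by omega
      set i : Fin h := ⟨k - 1, h1⟩
      have hi : ∀ j : Fin h, j ≤ i → s j = t j := fun j hj =>
        H j (by simp only [Fin.le_def, i] at hj; omega)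
      have := (mem_iff s t i).1 hi
      simp only [i] at this
      omega

/-- the summand coefficients -/
noncomputable def a (h : ℕ) (ρ : ℝ) (k : ℕ) : ℝ :=
  if k = 0 then ρ ^ (2 * h) else ρ ^ (2 * (h - k)) * (1 - ρ ^ 2)

lemma a_pos {ρ : ℝ} (hρ : ρ ∈ Set.Ioo (0:ℝ) 1) (k : ℕ) : 0 < a h ρ k := by
  obtain ⟨h0, h1⟩ := hρ
  unfold a
  have hρ2 : ρ ^ 2 < 1 := by
    calc ρ ^ 2 ≤ ρ ^ 1 := pow_le_pow_of_le_one h0.le h1.le (by norm_num)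
      _ = ρ := pow_one ρ
      _ < 1 := h1
  split
  · positivity
  · have : (0:ℝ) < 1 - ρ ^ 2 := by linarith
    positivity

lemma telescope (ρ : ℝ) (m : ℕ) (hm : m ≤ h) :
    ∑ k ∈ Finset.range (m + 1), a h ρ k = ρ ^ (2 * (h - m)) := by
  induction m with
  | zero => simp [a]
  | succ n ih =>
    rw [Finset.sum_range_succ, ih (by omega)]
    simp only [a, Nat.succ_ne_zero, if_false]
    have hn : 2 * (h - n) = 2 * (h - (n+1)) + 2 := by omega
    rw [hn, pow_add]
    ring

/-- prefix restriction map -/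
def pref (k : ℕ) (s : Fin h → Bool) : Fin h → Bool :=
  fun j => if (j : ℕ) < k then s j else false

lemma pref_eq_iff (k : ℕ) (s t : Fin h → Bool) :
    pref k s = pref k t ↔ ∀ j : Fin h, (j : ℕ) < k → s j = t j := by
  constructor
  · intro H j hj
    have := congrFun H j
    simpa [pref, hj] using this
  · intro H
    funext j
    by_cases hj : (j : ℕ) < k
    · simp [pref, hj, H j hj]
    · simp [pref, hj]

lemma pref_top (s : Fin h → Bool) : pref h s = s := by
  funext j; simp [pref, j.isLt]

lemma sigma_eq_sum (ρ : ℝ) (s t : Fin h → Bool) :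
    SigmaLeaf h ρ s t
      = ∑ k ∈ Finset.range (h + 1),
          (if pref k s = pref k t then a h ρ k else 0) := by
  classical
  have hm : lcpLen h s t ≤ h := lcpLen_le s t
  have step : ∑ k ∈ Finset.range (h + 1), (if pref k s = pref k t then a h ρ k else 0)
      = ∑ k ∈ Finset.range (h + 1), (if k ≤ lcpLen h s t then a h ρ k else 0) := by
    apply Finset.sum_congr rfl
    intro k hk
    rw [Finset.mem_range] at hk
    have : (pref k s = pref k t) ↔ (k ≤ lcpLen h s t) := by
      rw [pref_eq_iff, lcp_ge_iff s t k (by omega)]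
    simp only [this]
  rw [step, ← Finset.sum_filter]
  have hfil : (Finset.range (h+1)).filter (fun k => k ≤ lcpLen h s t)
      = Finset.range (lcpLen h s t + 1) := by
    ext k; simp only [Finset.mem_filter, Finset.mem_range]; omega
  rw [hfil, telescope ρ _ hm]
  rfl

/-- fiber sum -/
noncomputable def F (k : ℕ) (x : (Fin h → Bool) → ℝ) (p : Fin h → Bool) : ℝ :=
  ∑ u ∈ Finset.univ.filter (fun u => pref k u = p), x u

lemma group_sq (k : ℕ) (x : (Fin h → Bool) → ℝ) :
    ∑ s : Fin h → Bool, ∑ t : Fin h → Bool,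
        (if pref k s = pref k t then x s * x t else 0)
      = ∑ p : Fin h → Bool, (F k x p) ^ 2 := by
  classical
  have h1 : ∀ s : Fin h → Bool,
      x s * F k x (pref k s)
        = ∑ t : Fin h → Bool, (if pref k s = pref k t then x s * x t else 0) := by
    intro s
    rw [F, Finset.mul_sum, Finset.sum_filter]
    exact Finset.sum_congr rfl fun t _ => if_congr eq_comm rfl rfl
  simp_rw [← h1]
  rw [← Finset.sum_fiberwise Finset.univ (pref k) (fun s => x s * F k x (pref k s))]
  apply Finset.sum_congr rfl
  intro p _
  have h2 : ∑ s ∈ Finset.univ.filter (fun s => pref k s = p), x s * F k x (pref k s)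
      = ∑ s ∈ Finset.univ.filter (fun s => pref k s = p), x s * F k x p := by
    apply Finset.sum_congr rfl
    intro s hs
    rw [Finset.mem_filter] at hs
    rw [hs.2]
  rw [h2, ← Finset.sum_mul, sq]
  rfl

lemma F_top (x : (Fin h → Bool) → ℝ) (p : Fin h → Bool) : F h x p = x p := by
  classical
  rw [F]
  have : Finset.univ.filter (fun u : Fin h → Bool => pref h u = p) = {p} := by
    ext u
    simp [pref_top]
  rw [this, Finset.sum_singleton]

end SigmaAux

open SigmaAux in
/-- For every `h ≥ 0` and `ρ ∈ (0,1)`, the leaf covariance matrix `Σ^{(h)}` is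
positive definite; in particular it is invertible. -/
theorem sigmaLeaf_posDef (h : ℕ) (ρ : ℝ) (hρ : ρ ∈ Set.Ioo (0:ℝ) 1) :
    (SigmaLeaf h ρ).PosDef ∧ IsUnit (SigmaLeaf h ρ).det := by
  classical
  have hherm : (SigmaLeaf h ρ).IsHermitian := by
    unfold Matrix.IsHermitian
    ext s t
    simp [SigmaLeaf, Matrix.conjTranspose_apply, treeDist, lcpLen_symm t s]
  have hpd : (SigmaLeaf h ρ).PosDef := by
    refine Matrix.posDef_iff_dotProduct_mulVec.2 ⟨hherm, fun x hx => ?_⟩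
    have hstar : star x = x := rfl
    rw [hstar]
    have hq : x ⬝ᵥ ((SigmaLeaf h ρ) *ᵥ x)
        = ∑ k ∈ Finset.range (h+1), a h ρ k * ∑ p : Fin h → Bool, (F k x p) ^ 2 := by
      have e0 : x ⬝ᵥ ((SigmaLeaf h ρ) *ᵥ x)
          = ∑ s : Fin h → Bool, ∑ t : Fin h → Bool, x s * (SigmaLeaf h ρ s t * x t) := by
        simp [dotProduct, Matrix.mulVec, Finset.mul_sum]
      rw [e0]
      have e1 : ∀ s t : Fin h → Bool, x s * (SigmaLeaf h ρ s t * x t)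
          = ∑ k ∈ Finset.range (h+1),
              a h ρ k * (if pref k s = pref k t then x s * x t else 0) := by
        intro s t
        rw [sigma_eq_sum, Finset.sum_mul, Finset.mul_sum]
        apply Finset.sum_congr rfl
        intro k _
        by_cases hc : pref k s = pref k t
        · rw [if_pos hc, if_pos hc]; ring
        · rw [if_neg hc, if_neg hc]; ring
      simp_rw [e1]
      calc ∑ s : Fin h → Bool, ∑ t : Fin h → Bool, ∑ k ∈ Finset.range (h+1),
              a h ρ k * (if pref k s = pref k t then x s * x t else 0)
          = ∑ s : Fin h → Bool, ∑ k ∈ Finset.range (h+1), ∑ t : Fin h → Bool,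
              a h ρ k * (if pref k s = pref k t then x s * x t else 0) :=
            Finset.sum_congr rfl fun s _ => Finset.sum_comm
        _ = ∑ k ∈ Finset.range (h+1), ∑ s : Fin h → Bool, ∑ t : Fin h → Bool,
              a h ρ k * (if pref k s = pref k t then x s * x t else 0) :=
            Finset.sum_comm
        _ = ∑ k ∈ Finset.range (h+1), a h ρ k *
              ∑ p : Fin h → Bool, (F k x p) ^ 2 := by
            apply Finset.sum_congr rfl
            intro k _
            rw [← group_sq k x, Finset.mul_sum]
            exact Finset.sum_congr rfl fun s _ => (Finset.mul_sum _ _ _).symm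
    rw [hq]
    apply Finset.sum_pos'
    · intro k _
      have := a_pos (h := h) hρ k
      have hsq : (0:ℝ) ≤ ∑ p : Fin h → Bool, (F k x p) ^ 2 :=
        Finset.sum_nonneg fun p _ => sq_nonneg _
      positivity
    · refine ⟨h, Finset.self_mem_range_succ h, ?_⟩
      have hpos : (0:ℝ) < ∑ p : Fin h → Bool, (F h x p) ^ 2 := by
        obtain ⟨p, hp⟩ : ∃ p, x p ≠ 0 := by
          by_contra hn
          push_neg at hn
          exact hx (funext hn)
        apply Finset.sum_pos'
        · exact fun q _ => sq_nonneg _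
        · exact ⟨p, Finset.mem_univ p, by rw [F_top]; positivity⟩
      have := a_pos (h := h) hρ h
      positivity
  exact ⟨hpd, isUnit_iff_ne_zero.2 hpd.det_pos.ne'⟩
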